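/- Fix d ≥ 2 and p = (p₁,…,p_d) ∈ (0,1)^d. Let U = (U₁,…,U_d) and U' = (U'₁,…,U'_d) be independent random vectors, each constructed via the GFGM representation U_m = U₀,ₘ^{1-p_m}·U₁,ₘ^{I_m} from a {0,1}^d-valued random vector with pmf f (margins Σ_{i:i_m=1} f(i) = p_m) and vectors of i.i.d. standard uniform random variables, with all components of the construction independent across the two copies. Then P( U'₁ ≤ U₁, …, U'_d ≤ U_d ) = Σ_{i∈{0,1}^d} Σ_{j∈{0,1}^d} f(i)·f(j)·Π_{m=1}^d ( 1/2 - (i_m + j_m)/(2 p_m) + ( j_m(1-p_m) + i_m )/( p_m (2-p_m) ) ). Consequently, Kendall's tau equals τ = (1/(2^{d-1}-1))·( 2^d·Σ_{i,j∈{0,1}^d} f(i)f(j)·Π_{m=1}^d ( 1/2 - (i_m+j_m)/(2p_m) + (j_m(1-p_m)+i_m)/(p_m(2-p_m)) ) - 1 ). -/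

import Mathlib

open MeasureTheory ProbabilityTheory Set

/-- The real value (`0` or `1`) of a Bernoulli outcome. -/
noncomputable def bval (b : Bool) : ℝ := if b then 1 else 0

noncomputable def μ01 : Measure ℝ := volume.restrict (Icc 0 1)

instance : IsProbabilityMeasure μ01 :=
  ⟨by simp [μ01, Real.volume_Icc]⟩

/-- The per-coordinate factor in the GFGM Kendall tau formula. -/
noncomputable def gg (p x y : ℝ) : ℝ :=
  1 / 2 - (x + y) / (2 * p) + (y * (1 - p) + x) / (p * (2 - p))

lemma bval_nonneg (b : Bool) : 0 ≤ bval b := by cases b <;> simp [bval]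

lemma measurable_rpow_const {r : ℝ} (hr : 0 ≤ r) : Measurable fun x : ℝ => x ^ r :=
  (Real.continuous_rpow_const hr).measurable

lemma Measurable.rpow_bval {α : Type*} [MeasurableSpace α] {g : α → ℝ} (hg : Measurable g)
    {e : α → Bool} (he : Measurable e) : Measurable fun x => g x ^ bval (e x) := by
  have h : (fun x => g x ^ bval (e x))
      = fun x => if e x = true then g x ^ (1 : ℝ) else g x ^ (0 : ℝ) := by
    funext x; cases hx : e x <;> simp [bval, hx]
  rw [h]
  exact Measurable.ite (he (measurableSet_singleton true))
    ((measurable_rpow_const zero_le_one).comp hg)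
    ((measurable_rpow_const le_rfl).comp hg)

lemma mu01_rpow_le {a t : ℝ} (ha : 0 < a) (ht : t ∈ Icc (0:ℝ) 1) :
    μ01 {x : ℝ | x ^ a ≤ t} = ENNReal.ofReal (t ^ a⁻¹) := by
  have hs0 : 0 ≤ t ^ a⁻¹ := Real.rpow_nonneg ht.1 _
  have hs1 : t ^ a⁻¹ ≤ 1 := Real.rpow_le_one ht.1 ht.2 (inv_nonneg.2 ha.le)
  have hmeas : MeasurableSet {x : ℝ | x ^ a ≤ t} :=
    measurableSet_le (measurable_rpow_const ha.le) measurable_const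
  rw [μ01, Measure.restrict_apply hmeas]
  have hset : {x : ℝ | x ^ a ≤ t} ∩ Icc 0 1 = Icc 0 (t ^ a⁻¹) := by
    ext x
    simp only [mem_inter_iff, mem_setOf_eq, mem_Icc]
    constructor
    · rintro ⟨hxa, hx0, _⟩
      refine ⟨hx0, ?_⟩
      have h1 : (x ^ a) ^ a⁻¹ ≤ t ^ a⁻¹ :=
        Real.rpow_le_rpow (Real.rpow_nonneg hx0 _) hxa (inv_nonneg.2 ha.le)
      rwa [← Real.rpow_mul hx0, mul_inv_cancel₀ ha.ne', Real.rpow_one] at h1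
    · rintro ⟨hx0, hxs⟩
      refine ⟨?_, hx0, le_trans hxs hs1⟩
      have h1 : x ^ a ≤ (t ^ a⁻¹) ^ a := Real.rpow_le_rpow hx0 hxs ha.le
      rwa [← Real.rpow_mul ht.1, inv_mul_cancel₀ ha.ne', Real.rpow_one] at h1
  rw [hset, Real.volume_Icc, sub_zero]

lemma integrable_mu01_rpow {r : ℝ} (hr : -1 < r) : Integrable (fun x : ℝ => x ^ r) μ01 := by
  have h := intervalIntegral.intervalIntegrable_rpow' (a := 0) (b := 1) hr
  rw [intervalIntegrable_iff_integrableOn_Ioc_of_le zero_le_one] at h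
  have : volume.restrict (Ioc (0:ℝ) 1) = volume.restrict (Icc (0:ℝ) 1) :=
    Measure.restrict_congr_set Ioc_ae_eq_Icc
  rw [μ01, ← this]
  exact h

lemma integral_mu01_rpow {r : ℝ} (hr : -1 < r) : ∫ x, x ^ r ∂μ01 = 1 / (r + 1) := by
  have : volume.restrict (Ioc (0:ℝ) 1) = volume.restrict (Icc (0:ℝ) 1) :=
    Measure.restrict_congr_set Ioc_ae_eq_Icc
  rw [μ01, ← this]
  have h1 : ∫ x in Ioc (0:ℝ) 1, x ^ r = ∫ x in (0:ℝ)..1, x ^ r :=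
    (intervalIntegral.integral_of_le zero_le_one).symm
  rw [h1, integral_rpow (Or.inl hr), Real.one_rpow,
    Real.zero_rpow (by linarith : r + 1 ≠ 0), sub_zero]

lemma integral_mu01_id : ∫ x, x ∂μ01 = 1 / 2 := by
  have h := integral_mu01_rpow (r := 1) (by norm_num)
  norm_num [Real.rpow_one] at h; simpa using h

lemma integral_mu01_const (c : ℝ) : ∫ _, c ∂μ01 = c := by simp

/-- cdf of the product `V^(1-p) * W^(bval c)` at `t ∈ [0,1]`. -/
noncomputable def FF (p : ℝ) (c : Bool) (t : ℝ) : ℝ :=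
  if c then (t - (1 - p) * t ^ (1 - p)⁻¹) / p else t ^ (1 - p)⁻¹

lemma cdf {p : ℝ} (hp : p ∈ Ioo (0:ℝ) 1) (c : Bool) {t : ℝ} (ht : t ∈ Icc (0:ℝ) 1) :
    (μ01.prod μ01) {z : ℝ × ℝ | z.1 ^ (1 - p) * z.2 ^ bval c ≤ t}
      = ENNReal.ofReal (FF p c t) := by
  obtain ⟨hp0, hp1⟩ := hp
  have ha : (0:ℝ) < 1 - p := by linarith
  cases c
  · -- c = false
    simp only [bval, Bool.false_eq_true, if_false, Real.rpow_zero, mul_one, FF]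
    have hset : {z : ℝ × ℝ | z.1 ^ (1 - p) ≤ t} = {x : ℝ | x ^ (1-p) ≤ t} ×ˢ (univ : Set ℝ) := by
      ext ⟨x, y⟩; simp
    rw [hset, Measure.prod_prod, measure_univ, mul_one, mu01_rpow_le ha ht]
  · -- c = true
    simp only [bval, if_true, Real.rpow_one, FF]
    set a := 1 - p with hadef
    set s := t ^ a⁻¹ with hsdef
    have hs0 : 0 ≤ s := Real.rpow_nonneg ht.1 _
    have hs1 : s ≤ 1 := Real.rpow_le_one ht.1 ht.2 (inv_nonneg.2 ha.le)
    have hsa : s ^ a = t := by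
      rw [hsdef, ← Real.rpow_mul ht.1, inv_mul_cancel₀ ha.ne', Real.rpow_one]
    have hmeas : MeasurableSet {z : ℝ × ℝ | z.1 ^ a * z.2 ≤ t} :=
      measurableSet_le (((measurable_rpow_const ha.le).comp measurable_fst).mul measurable_snd)
        measurable_const
    rw [Measure.prod_apply hmeas]
    -- replace outer μ01 by restriction to Ioc 0 1
    have step : (∫⁻ x, μ01 (Prod.mk x ⁻¹' {z : ℝ × ℝ | z.1 ^ a * z.2 ≤ t}) ∂μ01)
        = ∫⁻ x in Ioc (0:ℝ) 1, μ01 (Prod.mk x ⁻¹' {z : ℝ × ℝ | z.1 ^ a * z.2 ≤ t}) ∂volume :=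
      (setLIntegral_congr Ioc_ae_eq_Icc).symm
    rw [step]
    have hptw : ∀ x ∈ Ioc (0:ℝ) 1,
        μ01 (Prod.mk x ⁻¹' {z : ℝ × ℝ | z.1 ^ a * z.2 ≤ t})
          = ENNReal.ofReal (min (t / x ^ a) 1) := by
      intro x hx
      have hxa : (0:ℝ) < x ^ a := Real.rpow_pos_of_pos hx.1 a
      have hpre : Prod.mk x ⁻¹' {z : ℝ × ℝ | z.1 ^ a * z.2 ≤ t} = Iic (t / x ^ a) := by
        ext y
        simp only [mem_preimage, mem_setOf_eq, mem_Iic]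
        rw [mul_comm, ← le_div_iff₀ hxa]
      rw [hpre, μ01, Measure.restrict_apply measurableSet_Iic]
      have : Iic (t / x ^ a) ∩ Icc 0 1 = Icc 0 (min (t / x ^ a) 1) := by
        ext y
        simp only [mem_inter_iff, mem_Iic, mem_Icc, le_min_iff]
        constructor
        · rintro ⟨h1, h2, h3⟩; exact ⟨h2, h1, h3⟩
        · rintro ⟨h1, h2, h3⟩; exact ⟨h2, h1, h3⟩
      rw [this, Real.volume_Icc, sub_zero]
    rw [setLIntegral_congr_fun measurableSet_Ioc hptw]
    -- convert to a real integral
    have hintegrable : IntegrableOn (fun x : ℝ => min (t / x ^ a) 1) (Ioc 0 1) volume := by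
      refine Integrable.mono' (integrable_const 1) ?_ ?_
      · exact (Measurable.min ((measurable_const.div (measurable_rpow_const ha.le))) measurable_const).aestronglyMeasurable
      · refine (ae_restrict_iff' measurableSet_Ioc).2 (Filter.Eventually.of_forall fun x hx => ?_)
        have hxa : (0:ℝ) < x ^ a := Real.rpow_pos_of_pos hx.1 a
        have h0 : 0 ≤ min (t / x ^ a) 1 := le_min (div_nonneg ht.1 hxa.le) zero_le_one
        have h1 : min (t / x ^ a) 1 ≤ 1 := min_le_right _ _
        rw [Real.norm_eq_abs, abs_of_nonneg h0]; exact h1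
    rw [← ofReal_integral_eq_lintegral_ofReal hintegrable ?_]
    swap
    · refine (ae_restrict_iff' measurableSet_Ioc).2 (Filter.Eventually.of_forall fun x hx => ?_)
      exact le_min (div_nonneg ht.1 (Real.rpow_pos_of_pos hx.1 a).le) zero_le_one
    -- split the integral at s
    congr 1
    have hsplit : Ioc (0:ℝ) 1 = Ioc 0 s ∪ Ioc s 1 := (Ioc_union_Ioc_eq_Ioc hs0 hs1).symm
    rw [hsplit, setIntegral_union (Ioc_disjoint_Ioc_of_le le_rfl) measurableSet_Ioc
      (hintegrable.mono_set (by rw [hsplit]; exact subset_union_left))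
      (hintegrable.mono_set (by rw [hsplit]; exact subset_union_right))]
    have hpiece1 : ∫ x in Ioc (0:ℝ) s, min (t / x ^ a) 1 = s := by
      rw [setIntegral_congr_fun measurableSet_Ioc (g := fun _ => (1:ℝ)) ?_]
      · rw [setIntegral_const, Measure.real, Real.volume_Ioc, sub_zero, smul_eq_mul, mul_one,
          ENNReal.toReal_ofReal hs0]
      · intro x hx
        have hxa : (0:ℝ) < x ^ a := Real.rpow_pos_of_pos hx.1 a
        have hle : x ^ a ≤ t := by
          have := Real.rpow_le_rpow hx.1.le hx.2 ha.le
          rwa [hsa] at this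
        have : (1:ℝ) ≤ t / x ^ a := (one_le_div hxa).2 hle
        exact min_eq_right this
    have hpiece2 : ∫ x in Ioc s 1, min (t / x ^ a) 1 = t * ((1 - s ^ (-a + 1)) / (-a + 1)) := by
      rw [setIntegral_congr_fun measurableSet_Ioc (g := fun x => t * x ^ (-a)) ?_]
      · rw [integral_const_mul]
        congr 1
        rw [← intervalIntegral.integral_of_le hs1, integral_rpow (Or.inl (by linarith)),
          Real.one_rpow]
      · intro x hx
        have hx0 : (0:ℝ) < x := lt_of_le_of_lt hs0 hx.1
        have hxa : (0:ℝ) < x ^ a := Real.rpow_pos_of_pos hx0 a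
        have hlt : t < x ^ a := by
          have := Real.rpow_lt_rpow hs0 hx.1 ha
          rwa [hsa] at this
        have hdiv : t / x ^ a = t * x ^ (-a) := by
          rw [div_eq_mul_inv, ← Real.rpow_neg hx0.le]
        exact (min_eq_left ((div_le_one hxa).2 hlt.le)).trans hdiv
    rw [hpiece1, hpiece2]
    -- final algebra
    rcases eq_or_lt_of_le ht.1 with h0 | h0
    · have ht0 : t = 0 := h0.symm
      have hs0' : s = 0 := by
        rw [hsdef, ht0, Real.zero_rpow (inv_ne_zero ha.ne')]
      rw [ht0, hs0']; simp
    · have hpa : -a + 1 = p := by rw [hadef]; ring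
      have hts : t * s ^ (-a + 1) = s := by
        rw [hsdef, ← Real.rpow_mul ht.1]
        nth_rewrite 1 [← Real.rpow_one t]
        rw [← Real.rpow_add h0]
        congr 1
        field_simp
        ring
      calc s + t * ((1 - s ^ (-a + 1)) / (-a + 1))
          = s + (t - t * s ^ (-a + 1)) / p := by rw [hpa]; ring
        _ = s + (t - s) / p := by rw [hts]
        _ = (t - a * s) / p := by
            rw [hadef]; field_simp; ring
      
lemma rpow_rpow_inv {x a : ℝ} (hx : 0 ≤ x) (ha : a ≠ 0) : (x ^ a) ^ a⁻¹ = x := by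
  rw [← Real.rpow_mul hx, mul_inv_cancel₀ ha, Real.rpow_one]

lemma key_ineq {p x : ℝ} (hp0 : 0 < p) (hp1 : p < 1) (hx0 : 0 ≤ x) (hx1 : x ≤ 1) :
    (1 - p) * x ≤ x ^ (1 - p) := by
  rcases eq_or_lt_of_le hx0 with h | h
  · rw [← h, Real.zero_rpow (by linarith : (1:ℝ) - p ≠ 0), mul_zero]
  · have h1 : x ^ (1:ℝ) ≤ x ^ (1 - p) :=
      Real.rpow_le_rpow_of_exponent_ge h hx1 (by linarith)
    rw [Real.rpow_one] at h1
    nlinarith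

lemma rpow_inv_le {p y : ℝ} (hp0 : 0 < p) (hp1 : p < 1) (hy0 : 0 ≤ y) (hy1 : y ≤ 1) :
    y ^ (1 - p)⁻¹ ≤ y := by
  rcases eq_or_lt_of_le hy0 with h | h
  · rw [← h, Real.zero_rpow (inv_ne_zero (by linarith : (1:ℝ) - p ≠ 0))]
  · have h1 : y ^ (1 - p)⁻¹ ≤ y ^ (1:ℝ) :=
      Real.rpow_le_rpow_of_exponent_ge h hy1 ((one_le_inv₀ (by linarith)).2 (by linarith))
    rwa [Real.rpow_one] at h1

lemma bval_mul_inv_le {p : ℝ} (hp0 : 0 < p) (hp1 : p < 1) (b : Bool) {y : ℝ}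
    (hy0 : 0 ≤ y) (hy1 : y ≤ 1) : y ^ (bval b * (1 - p)⁻¹) ≤ y ^ bval b := by
  cases b
  · simp [bval]
  · simpa [bval, Real.rpow_one] using rpow_inv_le hp0 hp1 hy0 hy1

lemma coordProb {p : ℝ} (hp : p ∈ Ioo (0:ℝ) 1) (b c : Bool) :
    ((μ01.prod μ01).prod (μ01.prod μ01))
      {z : (ℝ×ℝ)×(ℝ×ℝ) | z.2.1 ^ (1-p) * z.2.2 ^ bval c ≤ z.1.1 ^ (1-p) * z.1.2 ^ bval b}
      = ENNReal.ofReal (gg p (bval c) (bval b)) := by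
  obtain ⟨hp0, hp1⟩ := hp
  have ha : (0:ℝ) < 1 - p := by linarith
  have hinv0 : (0:ℝ) ≤ (1 - p)⁻¹ := inv_nonneg.2 ha.le
  have he : (-1:ℝ) < bval b * (1 - p)⁻¹ :=
    lt_of_lt_of_le (by norm_num) (mul_nonneg (bval_nonneg b) hinv0)
  have hb1 : (-1:ℝ) < bval b := lt_of_lt_of_le (by norm_num) (bval_nonneg b)
  have hSmeas : MeasurableSet
      {z : (ℝ×ℝ)×(ℝ×ℝ) | z.2.1 ^ (1-p) * z.2.2 ^ bval c ≤ z.1.1 ^ (1-p) * z.1.2 ^ bval b} := by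
    refine measurableSet_le ?_ ?_
    · exact ((measurable_rpow_const ha.le).comp (measurable_fst.comp measurable_snd)).mul
        ((measurable_rpow_const (bval_nonneg c)).comp (measurable_snd.comp measurable_snd))
    · exact ((measurable_rpow_const ha.le).comp (measurable_fst.comp measurable_fst)).mul
        ((measurable_rpow_const (bval_nonneg b)).comp (measurable_snd.comp measurable_fst))
  have hprodR : μ01.prod μ01
      = (volume.prod volume).restrict (Icc (0:ℝ) 1 ×ˢ Icc (0:ℝ) 1) :=
    Measure.prod_restrict _ _
  have hRmeas : MeasurableSet (Icc (0:ℝ) 1 ×ˢ Icc (0:ℝ) 1) :=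
    measurableSet_Icc.prod measurableSet_Icc
  rw [Measure.prod_apply hSmeas]
  have hint0 : ∀ G : ℝ × ℝ → ENNReal, (∫⁻ z1, G z1 ∂(μ01.prod μ01))
      = ∫⁻ z1 in Icc (0:ℝ) 1 ×ˢ Icc (0:ℝ) 1, G z1 ∂(volume.prod volume) := by
    intro G; rw [hprodR]
  rw [hint0]
  set φ : (ℝ × ℝ) → ℝ := fun z =>
    if c then (z.1 ^ (1-p) * z.2 ^ bval b
        - (1-p) * (z.1 ^ (1:ℝ) * z.2 ^ (bval b * (1-p)⁻¹))) / p
    else z.1 ^ (1:ℝ) * z.2 ^ (bval b * (1-p)⁻¹) with hφ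
  have hptw : ∀ z1 ∈ Icc (0:ℝ) 1 ×ˢ Icc (0:ℝ) 1,
      (μ01.prod μ01) (Prod.mk z1 ⁻¹'
        {z : (ℝ×ℝ)×(ℝ×ℝ) | z.2.1 ^ (1-p) * z.2.2 ^ bval c ≤ z.1.1 ^ (1-p) * z.1.2 ^ bval b})
      = ENNReal.ofReal (φ z1) := by
    rintro ⟨x, y⟩ ⟨hx, hy⟩
    have ht : x ^ (1-p) * y ^ bval b ∈ Icc (0:ℝ) 1 := by
      constructor
      · exact mul_nonneg (Real.rpow_nonneg hx.1 _) (Real.rpow_nonneg hy.1 _)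
      · exact mul_le_one₀ (Real.rpow_le_one hx.1 hx.2 ha.le)
          (Real.rpow_nonneg hy.1 _) (Real.rpow_le_one hy.1 hy.2 (bval_nonneg b))
    have hpre : (μ01.prod μ01) (Prod.mk (x, y) ⁻¹'
        {z : (ℝ×ℝ)×(ℝ×ℝ) | z.2.1 ^ (1-p) * z.2.2 ^ bval c ≤ z.1.1 ^ (1-p) * z.1.2 ^ bval b})
        = ENNReal.ofReal (FF p c (x ^ (1-p) * y ^ bval b)) := cdf ⟨hp0, hp1⟩ c ht
    rw [hpre]
    congr 1
    have hmul : (x ^ (1-p) * y ^ bval b) ^ (1-p)⁻¹ = x ^ (1:ℝ) * y ^ (bval b * (1-p)⁻¹) := by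
      rw [Real.mul_rpow (Real.rpow_nonneg hx.1 _) (Real.rpow_nonneg hy.1 _),
        rpow_rpow_inv hx.1 ha.ne', ← Real.rpow_mul hy.1, Real.rpow_one]
    cases c
    · simp only [FF, φ, Bool.false_eq_true, if_false]
      exact hmul
    · simp only [FF, φ, if_true]
      rw [hmul]
  rw [setLIntegral_congr_fun hRmeas hptw]
  have hA : Integrable (fun z : ℝ × ℝ => z.1 ^ (1-p) * z.2 ^ bval b) (μ01.prod μ01) :=
    (integrable_mu01_rpow (by linarith)).mul_prod (integrable_mu01_rpow hb1)
  have hB : Integrable (fun z : ℝ × ℝ => z.1 ^ (1:ℝ) * z.2 ^ (bval b * (1-p)⁻¹))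
      (μ01.prod μ01) :=
    (integrable_mu01_rpow (by norm_num)).mul_prod (integrable_mu01_rpow he)
  have hφint : Integrable φ ((volume.prod volume).restrict (Icc (0:ℝ) 1 ×ˢ Icc (0:ℝ) 1)) := by
    rw [← hprodR]
    cases c
    · simpa only [φ, Bool.false_eq_true, if_false] using hB
    · simp only [φ, if_true]
      exact (hA.sub (hB.const_mul _)).div_const _
  have hφnn : 0 ≤ᵐ[(volume.prod volume).restrict (Icc (0:ℝ) 1 ×ˢ Icc (0:ℝ) 1)] φ := by
    refine (ae_restrict_iff' hRmeas).2 (Filter.Eventually.of_forall ?_)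
    rintro ⟨x, y⟩ ⟨hx, hy⟩
    have h1 : y ^ (bval b * (1-p)⁻¹) ≤ y ^ bval b := bval_mul_inv_le hp0 hp1 b hy.1 hy.2
    have h2 : (1-p) * x ≤ x ^ (1-p) := key_ineq hp0 hp1 hx.1 hx.2
    have h3 : (0:ℝ) ≤ y ^ (bval b * (1-p)⁻¹) := Real.rpow_nonneg hy.1 _
    have h4 : (0:ℝ) ≤ x ^ (1-p) := Real.rpow_nonneg hx.1 _
    cases c
    · simp only [φ, Bool.false_eq_true, if_false]
      exact mul_nonneg (Real.rpow_nonneg hx.1 _) h3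
    · simp only [φ, if_true]
      refine div_nonneg (sub_nonneg.2 ?_) hp0.le
      rw [Real.rpow_one]
      calc (1-p) * (x * y ^ (bval b * (1-p)⁻¹)) = ((1-p) * x) * y ^ (bval b * (1-p)⁻¹) := by ring
        _ ≤ x ^ (1-p) * y ^ (bval b * (1-p)⁻¹) := by
            exact mul_le_mul_of_nonneg_right h2 h3
        _ ≤ x ^ (1-p) * y ^ bval b := mul_le_mul_of_nonneg_left h1 h4
  rw [← ofReal_integral_eq_lintegral_ofReal hφint hφnn]
  congr 1
  rw [← hprodR]
  have hI1 : ∫ x : ℝ, x ^ (1:ℝ) ∂μ01 = 1/2 := by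
    rw [integral_mu01_rpow (by norm_num)]; norm_num
  cases c
  · simp only [φ, Bool.false_eq_true, if_false]
    rw [integral_prod_mul (f := fun x : ℝ => x ^ (1:ℝ))
        (g := fun y : ℝ => y ^ (bval b * (1-p)⁻¹)),
      hI1, integral_mu01_rpow he]
    have hne2 : (2:ℝ) - p ≠ 0 := by linarith
    cases b
    · simp [gg, bval]
    · simp only [gg, bval, if_true, Bool.false_eq_true, if_false, one_mul]
      field_simp
      ring
  · simp only [φ, if_true]
    rw [integral_div, integral_sub hA (hB.const_mul _), integral_const_mul,
      integral_prod_mul (f := fun x : ℝ => x ^ (1-p)) (g := fun y : ℝ => y ^ bval b),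
      integral_prod_mul (f := fun x : ℝ => x ^ (1:ℝ))
        (g := fun y : ℝ => y ^ (bval b * (1-p)⁻¹)),
      hI1, integral_mu01_rpow (by linarith : (-1:ℝ) < 1 - p), integral_mu01_rpow hb1,
      integral_mu01_rpow he]
    have hne2 : (2:ℝ) - p ≠ 0 := by linarith
    cases b
    · simp only [gg, bval, Bool.false_eq_true, if_false, zero_mul, add_zero, zero_add,
        Real.rpow_zero, mul_zero, zero_div, if_true]
      field_simp
      ring
    · simp only [gg, bval, if_true, Bool.false_eq_true, if_false, one_mul]
      field_simp
      ring

lemma mpPhi (d : ℕ) : MeasurePreserving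
    (fun uu' : ((Fin d ⊕ Fin d) → ℝ) × ((Fin d ⊕ Fin d) → ℝ) =>
      fun m : Fin d => ((uu'.1 (Sum.inl m), uu'.1 (Sum.inr m)),
        (uu'.2 (Sum.inl m), uu'.2 (Sum.inr m))))
    ((Measure.pi fun _ : Fin d ⊕ Fin d => μ01).prod (Measure.pi fun _ : Fin d ⊕ Fin d => μ01))
    (Measure.pi fun _ : Fin d => ((μ01.prod μ01).prod (μ01.prod μ01))) := by
  have e1 : MeasurePreserving
      (fun u : (Fin d ⊕ Fin d) → ℝ => fun m : Fin d => (u (Sum.inl m), u (Sum.inr m)))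
      (Measure.pi fun _ : Fin d ⊕ Fin d => μ01)
      (Measure.pi fun _ : Fin d => μ01.prod μ01) := by
    have h1 := (measurePreserving_sumPiEquivProdPi_symm
      (fun _ : Fin d ⊕ Fin d => μ01)).symm
    have h2 := (measurePreserving_arrowProdEquivProdArrow ℝ ℝ (Fin d)
      (fun _ => μ01) (fun _ => μ01)).symm
    have h3 := h2.comp h1
    have hfun : ((MeasurableEquiv.arrowProdEquivProdArrow ℝ ℝ (Fin d)).symm ∘
        (MeasurableEquiv.sumPiEquivProdPi (fun _ : Fin d ⊕ Fin d => ℝ)).symm.symm)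
        = fun u : (Fin d ⊕ Fin d) → ℝ => fun m : Fin d => (u (Sum.inl m), u (Sum.inr m)) := by
      funext u
      simp [MeasurableEquiv.arrowProdEquivProdArrow, MeasurableEquiv.sumPiEquivProdPi,
        Equiv.arrowProdEquivProdArrow, Equiv.sumPiEquivProdPi]
    rwa [hfun] at h3
  have e2 := e1.prod e1
  have h4 := (measurePreserving_arrowProdEquivProdArrow (ℝ × ℝ) (ℝ × ℝ) (Fin d)
    (fun _ => μ01.prod μ01) (fun _ => μ01.prod μ01)).symm
  have h5 := h4.comp e2
  have hfun2 : ((MeasurableEquiv.arrowProdEquivProdArrow (ℝ × ℝ) (ℝ × ℝ) (Fin d)).symm ∘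
      (Prod.map (fun u : (Fin d ⊕ Fin d) → ℝ => fun m : Fin d => (u (Sum.inl m), u (Sum.inr m)))
        (fun u : (Fin d ⊕ Fin d) → ℝ => fun m : Fin d => (u (Sum.inl m), u (Sum.inr m)))))
      = fun uu' : ((Fin d ⊕ Fin d) → ℝ) × ((Fin d ⊕ Fin d) → ℝ) =>
        fun m : Fin d => ((uu'.1 (Sum.inl m), uu'.1 (Sum.inr m)),
          (uu'.2 (Sum.inl m), uu'.2 (Sum.inr m))) := by
    funext uu'
    simp [MeasurableEquiv.arrowProdEquivProdArrow, Equiv.arrowProdEquivProdArrow]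
  rwa [hfun2] at h5

lemma gg_nonneg {p : ℝ} (hp : p ∈ Ioo (0:ℝ) 1) (x y : Bool) : 0 ≤ gg p (bval x) (bval y) := by
  obtain ⟨hp0, hp1⟩ := hp
  have h2 : (0:ℝ) < 2 - p := by linarith
  cases x <;> cases y <;>
    simp only [gg, bval, if_true, Bool.false_eq_true, if_false]
  · norm_num
  · have h : (1:ℝ)/2 - (0 + 1)/(2*p) + (1*(1-p) + 0)/(p*(2-p)) = (1-p)/(2*(2-p)) := by
      field_simp; ring
    rw [h]
    have : (0:ℝ) < 1 - p := by linarith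
    positivity
  · have h : (1:ℝ)/2 - (1 + 0)/(2*p) + (0*(1-p) + 1)/(p*(2-p)) = (3-p)/(2*(2-p)) := by
      field_simp; ring
    rw [h]
    have h3 : (0:ℝ) < 3 - p := by linarith
    positivity
  · have h : (1:ℝ)/2 - (1 + 1)/(2*p) + (1*(1-p) + 1)/(p*(2-p)) = 1/2 := by
      field_simp; ring
    rw [h]; norm_num

/-- Fix `d ≥ 2` and `p ∈ (0,1)^d`.  Let `U` and `U'` be independent copies (realized on a
product probability space) constructed via the GFGM representation from a Bernoulli
vector with pmf `f`.  Then
`P(U' ≤ U) = Σ_{i,j} f(i) f(j) Π_m (1/2 - (i_m+j_m)/(2p_m) + (j_m(1-p_m)+i_m)/(p_m(2-p_m)))`,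
and consequently Kendall's tau equals
`τ = (1/(2^{d-1}-1)) (2^d Σ_{i,j} f(i)f(j) Π_m (…) - 1)`. -/
theorem gfgm_kendall_tau
    {Ω : Type*} [MeasurableSpace Ω] (P : Measure Ω) [IsProbabilityMeasure P]
    {Ω' : Type*} [MeasurableSpace Ω'] (P' : Measure Ω') [IsProbabilityMeasure P']
    (d : ℕ) (hd : 2 ≤ d) (p : Fin d → ℝ) (hp : ∀ m, p m ∈ Ioo (0 : ℝ) 1)
    (f : (Fin d → Bool) → ℝ) (hf0 : ∀ i, 0 ≤ f i) (hf1 : ∑ i : Fin d → Bool, f i = 1)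
    (hmarg : ∀ m, ∑ i ∈ Finset.univ.filter (fun i : Fin d → Bool => i m = true), f i = p m)
    (I : Ω → Fin d → Bool) (U₀ U₁ : Fin d → Ω → ℝ)
    (I' : Ω' → Fin d → Bool) (U₀' U₁' : Fin d → Ω' → ℝ)
    (hI : Measurable I) (hU₀ : ∀ m, Measurable (U₀ m)) (hU₁ : ∀ m, Measurable (U₁ m))
    (hI' : Measurable I') (hU₀' : ∀ m, Measurable (U₀' m)) (hU₁' : ∀ m, Measurable (U₁' m))
    (hU₀law : ∀ m, P.map (U₀ m) = volume.restrict (Icc (0 : ℝ) 1))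
    (hU₁law : ∀ m, P.map (U₁ m) = volume.restrict (Icc (0 : ℝ) 1))
    (hU₀law' : ∀ m, P'.map (U₀' m) = volume.restrict (Icc (0 : ℝ) 1))
    (hU₁law' : ∀ m, P'.map (U₁' m) = volume.restrict (Icc (0 : ℝ) 1))
    (hIpmf : ∀ i : Fin d → Bool, P {ω | I ω = i} = ENNReal.ofReal (f i))
    (hIpmf' : ∀ i : Fin d → Bool, P' {ω | I' ω = i} = ENNReal.ofReal (f i))
    (hiid : iIndepFun
      (Sum.elim U₀ U₁) P)
    (hIU : IndepFun I (fun ω j => Sum.elim U₀ U₁ j ω) P)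
    (hiid' : iIndepFun
      (Sum.elim U₀' U₁') P')
    (hIU' : IndepFun I' (fun ω j => Sum.elim U₀' U₁' j ω) P') :
    ((P.prod P') {q : Ω × Ω' | ∀ m,
        U₀' m q.2 ^ (1 - p m) * U₁' m q.2 ^ bval (I' q.2 m)
          ≤ U₀ m q.1 ^ (1 - p m) * U₁ m q.1 ^ bval (I q.1 m)}).toReal
      = ∑ i : Fin d → Bool, ∑ j : Fin d → Bool, f i * f j *
          ∏ m, (1 / 2 - (bval (i m) + bval (j m)) / (2 * p m)
            + (bval (j m) * (1 - p m) + bval (i m)) / (p m * (2 - p m)))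
    ∧ (1 / ((2 : ℝ) ^ (d - 1) - 1)) *
        ((2 : ℝ) ^ d * ((P.prod P') {q : Ω × Ω' | ∀ m,
          U₀' m q.2 ^ (1 - p m) * U₁' m q.2 ^ bval (I' q.2 m)
            ≤ U₀ m q.1 ^ (1 - p m) * U₁ m q.1 ^ bval (I q.1 m)}).toReal - 1)
      = (1 / ((2 : ℝ) ^ (d - 1) - 1)) *
          ((2 : ℝ) ^ d * (∑ i : Fin d → Bool, ∑ j : Fin d → Bool, f i * f j *
            ∏ m, (1 / 2 - (bval (i m) + bval (j m)) / (2 * p m)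
              + (bval (j m) * (1 - p m) + bval (i m)) / (p m * (2 - p m)))) - 1) := by
  -- abbreviations
  set Q : Measure ((Fin d ⊕ Fin d) → ℝ) := Measure.pi fun _ => μ01 with hQ
  set ν : Measure (Fin d → Bool) := P.map I with hν
  set ν' : Measure (Fin d → Bool) := P'.map I' with hν'
  haveI : IsProbabilityMeasure ν := Measure.isProbabilityMeasure_map hI.aemeasurable
  haveI : IsProbabilityMeasure ν' := Measure.isProbabilityMeasure_map hI'.aemeasurable
  have hXm : Measurable (fun ω => fun j => Sum.elim U₀ U₁ j ω) := by
    refine measurable_pi_lambda _ fun k => ?_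
    cases k with
    | inl m => exact hU₀ m
    | inr m => exact hU₁ m
  have hXm' : Measurable (fun ω' => fun j => Sum.elim U₀' U₁' j ω') := by
    refine measurable_pi_lambda _ fun k => ?_
    cases k with
    | inl m => exact hU₀' m
    | inr m => exact hU₁' m
  -- law of the uniform vector
  have hlawX : P.map (fun ω => fun j => Sum.elim U₀ U₁ j ω) = Q := by
    refine (Measure.pi_eq fun s hs => ?_).symm
    rw [Measure.map_apply hXm (MeasurableSet.univ_pi hs)]
    have hpre : (fun ω => fun j => Sum.elim U₀ U₁ j ω) ⁻¹' (univ.pi s)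
        = ⋂ k, Sum.elim U₀ U₁ k ⁻¹' s k := by
      ext ω; simp [Set.mem_pi]
    rw [hpre, hiid.meas_iInter (fun k => ⟨s k, hs k, rfl⟩)]
    refine Finset.prod_congr rfl fun k _ => ?_
    cases k with
    | inl m =>
        rw [show Sum.elim U₀ U₁ (Sum.inl m) = U₀ m from rfl,
          ← Measure.map_apply (hU₀ m) (hs _), hU₀law m]
        rfl
    | inr m =>
        rw [show Sum.elim U₀ U₁ (Sum.inr m) = U₁ m from rfl,
          ← Measure.map_apply (hU₁ m) (hs _), hU₁law m]
        rfl
  have hlawX' : P'.map (fun ω' => fun j => Sum.elim U₀' U₁' j ω') = Q := by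
    refine (Measure.pi_eq fun s hs => ?_).symm
    rw [Measure.map_apply hXm' (MeasurableSet.univ_pi hs)]
    have hpre : (fun ω' => fun j => Sum.elim U₀' U₁' j ω') ⁻¹' (univ.pi s)
        = ⋂ k, Sum.elim U₀' U₁' k ⁻¹' s k := by
      ext ω; simp [Set.mem_pi]
    rw [hpre, hiid'.meas_iInter (fun k => ⟨s k, hs k, rfl⟩)]
    refine Finset.prod_congr rfl fun k _ => ?_
    cases k with
    | inl m =>
        rw [show Sum.elim U₀' U₁' (Sum.inl m) = U₀' m from rfl,
          ← Measure.map_apply (hU₀' m) (hs _), hU₀law' m]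
        rfl
    | inr m =>
        rw [show Sum.elim U₀' U₁' (Sum.inr m) = U₁' m from rfl,
          ← Measure.map_apply (hU₁' m) (hs _), hU₁law' m]
        rfl
  -- joint law
  have hjoint : P.map (fun ω => (I ω, fun j => Sum.elim U₀ U₁ j ω)) = ν.prod Q := by
    have h := (indepFun_iff_map_prod_eq_prod_map_map hI.aemeasurable hXm.aemeasurable).mp hIU
    rw [h, hlawX, hν]
  have hjoint' : P'.map (fun ω' => (I' ω', fun j => Sum.elim U₀' U₁' j ω')) = ν'.prod Q := by
    have h := (indepFun_iff_map_prod_eq_prod_map_map hI'.aemeasurable hXm'.aemeasurable).mp hIU'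
    rw [h, hlawX', hν']
  -- the canonical event
  set E : Set (((Fin d → Bool) × ((Fin d ⊕ Fin d) → ℝ))
      × ((Fin d → Bool) × ((Fin d ⊕ Fin d) → ℝ))) :=
    {r | ∀ m, r.2.2 (Sum.inl m) ^ (1 - p m) * r.2.2 (Sum.inr m) ^ bval (r.2.1 m)
          ≤ r.1.2 (Sum.inl m) ^ (1 - p m) * r.1.2 (Sum.inr m) ^ bval (r.1.1 m)} with hEdef
  have hp0 : ∀ m, (0:ℝ) ≤ 1 - p m := fun m => by have := (hp m).2; linarith
  have hE : MeasurableSet E := by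
    rw [hEdef, Set.setOf_forall]
    refine MeasurableSet.iInter fun m => measurableSet_le ?_ ?_
    · exact (((measurable_rpow_const (hp0 m)).comp
          ((measurable_pi_apply _).comp (measurable_snd.comp measurable_snd)))).mul
        (Measurable.rpow_bval ((measurable_pi_apply _).comp (measurable_snd.comp measurable_snd))
          ((measurable_pi_apply m).comp (measurable_fst.comp measurable_snd)))
    · exact (((measurable_rpow_const (hp0 m)).comp
          ((measurable_pi_apply _).comp (measurable_snd.comp measurable_fst)))).mul
        (Measurable.rpow_bval ((measurable_pi_apply _).comp (measurable_snd.comp measurable_fst))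
          ((measurable_pi_apply m).comp (measurable_fst.comp measurable_fst)))
  -- push the probability to the canonical space
  have hJm : Measurable (fun ω => (I ω, fun j => Sum.elim U₀ U₁ j ω)) := hI.prodMk hXm
  have hJm' : Measurable (fun ω' => (I' ω', fun j => Sum.elim U₀' U₁' j ω')) := hI'.prodMk hXm'
  have hstep1 : (P.prod P') {q : Ω × Ω' | ∀ m,
        U₀' m q.2 ^ (1 - p m) * U₁' m q.2 ^ bval (I' q.2 m)
          ≤ U₀ m q.1 ^ (1 - p m) * U₁ m q.1 ^ bval (I q.1 m)}
      = ((ν.prod Q).prod (ν'.prod Q)) E := by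
    have hset : {q : Ω × Ω' | ∀ m,
        U₀' m q.2 ^ (1 - p m) * U₁' m q.2 ^ bval (I' q.2 m)
          ≤ U₀ m q.1 ^ (1 - p m) * U₁ m q.1 ^ bval (I q.1 m)}
        = Prod.map (fun ω => (I ω, fun j => Sum.elim U₀ U₁ j ω))
            (fun ω' => (I' ω', fun j => Sum.elim U₀' U₁' j ω')) ⁻¹' E := rfl
    rw [hset, ← Measure.map_apply (hJm.prodMap hJm') hE,
      ← Measure.map_prod_map _ _ hJm hJm', hjoint, hjoint']
  -- coordinate event sets
  set T : (Fin d → Bool) → (Fin d → Bool) →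
      Set (((Fin d ⊕ Fin d) → ℝ) × ((Fin d ⊕ Fin d) → ℝ)) := fun i j =>
    {w | ∀ m, w.2 (Sum.inl m) ^ (1 - p m) * w.2 (Sum.inr m) ^ bval (j m)
        ≤ w.1 (Sum.inl m) ^ (1 - p m) * w.1 (Sum.inr m) ^ bval (i m)} with hTdef
  have hT : ∀ i j, MeasurableSet (T i j) := by
    intro i j
    simp only [hTdef, Set.setOf_forall]
    refine MeasurableSet.iInter fun m => measurableSet_le ?_ ?_
    · exact (((measurable_rpow_const (hp0 m)).comp
          ((measurable_pi_apply _).comp measurable_snd))).mul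
        ((measurable_rpow_const (bval_nonneg _)).comp
          ((measurable_pi_apply _).comp measurable_snd))
    · exact (((measurable_rpow_const (hp0 m)).comp
          ((measurable_pi_apply _).comp measurable_fst))).mul
        ((measurable_rpow_const (bval_nonneg _)).comp
          ((measurable_pi_apply _).comp measurable_fst))
  set Ej : (Fin d → Bool) →
      Set (((Fin d → Bool) × ((Fin d ⊕ Fin d) → ℝ)) × ((Fin d ⊕ Fin d) → ℝ)) := fun j =>
    {r | ∀ m, r.2 (Sum.inl m) ^ (1 - p m) * r.2 (Sum.inr m) ^ bval (j m)
        ≤ r.1.2 (Sum.inl m) ^ (1 - p m) * r.1.2 (Sum.inr m) ^ bval (r.1.1 m)} with hEjdef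
  have hEj : ∀ j, MeasurableSet (Ej j) := by
    intro j
    simp only [hEjdef, Set.setOf_forall]
    refine MeasurableSet.iInter fun m => measurableSet_le ?_ ?_
    · exact (((measurable_rpow_const (hp0 m)).comp
          ((measurable_pi_apply _).comp measurable_snd))).mul
        ((measurable_rpow_const (bval_nonneg _)).comp
          ((measurable_pi_apply _).comp measurable_snd))
    · exact (((measurable_rpow_const (hp0 m)).comp
          ((measurable_pi_apply _).comp (measurable_snd.comp measurable_fst)))).mul
        (Measurable.rpow_bval
          ((measurable_pi_apply _).comp (measurable_snd.comp measurable_fst))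
          ((measurable_pi_apply m).comp (measurable_fst.comp measurable_fst)))
  -- decompose over the discrete coordinates
  have hdec : ((ν.prod Q).prod (ν'.prod Q)) E
      = ∑ j : Fin d → Bool, (∑ i : Fin d → Bool, (Q.prod Q) (T i j) * ν {i}) * ν' {j} := by
    rw [Measure.prod_apply hE]
    have h1 : ∀ x : (Fin d → Bool) × ((Fin d ⊕ Fin d) → ℝ),
        (ν'.prod Q) (Prod.mk x ⁻¹' E) = ∑ j, Q (Prod.mk x ⁻¹' Ej j) * ν' {j} := by
      intro x
      rw [Measure.prod_apply (measurable_prodMk_left hE), lintegral_fintype]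
      rfl
    rw [lintegral_congr h1,
      lintegral_finset_sum _ (fun j _ =>
        (measurable_measure_prodMk_left (hEj j)).mul_const _)]
    refine Finset.sum_congr rfl fun j _ => ?_
    rw [lintegral_mul_const _ (measurable_measure_prodMk_left (hEj j))]
    congr 1
    rw [lintegral_prod _ (measurable_measure_prodMk_left (hEj j)).aemeasurable,
      lintegral_fintype]
    refine Finset.sum_congr rfl fun i _ => ?_
    congr 1
    rw [Measure.prod_apply (hT i j)]
    rfl
  -- values of the pieces
  have hpmf2 : ∀ i, ν {i} = ENNReal.ofReal (f i) := fun i => by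
    rw [hν, Measure.map_apply hI (measurableSet_singleton i)]
    exact hIpmf i
  have hpmf2' : ∀ j, ν' {j} = ENNReal.ofReal (f j) := fun j => by
    rw [hν', Measure.map_apply hI' (measurableSet_singleton j)]
    exact hIpmf' j
  have hTval : ∀ i j, (Q.prod Q) (T i j)
      = ENNReal.ofReal (∏ m, gg (p m) (bval (j m)) (bval (i m))) := by
    intro i j
    have hBm : ∀ m : Fin d, MeasurableSet {z : (ℝ×ℝ)×(ℝ×ℝ) |
        z.2.1 ^ (1 - p m) * z.2.2 ^ bval (j m) ≤ z.1.1 ^ (1 - p m) * z.1.2 ^ bval (i m)} := by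
      intro m
      refine measurableSet_le ?_ ?_
      · exact (((measurable_rpow_const (hp0 m)).comp
            (measurable_fst.comp measurable_snd))).mul
          ((measurable_rpow_const (bval_nonneg _)).comp
            (measurable_snd.comp measurable_snd))
      · exact (((measurable_rpow_const (hp0 m)).comp
            (measurable_fst.comp measurable_fst))).mul
          ((measurable_rpow_const (bval_nonneg _)).comp
            (measurable_snd.comp measurable_fst))
    have hpre : T i j = (fun uu' : ((Fin d ⊕ Fin d) → ℝ) × ((Fin d ⊕ Fin d) → ℝ) =>
        fun m : Fin d => ((uu'.1 (Sum.inl m), uu'.1 (Sum.inr m)),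
          (uu'.2 (Sum.inl m), uu'.2 (Sum.inr m)))) ⁻¹'
        (univ.pi fun m => {z : (ℝ×ℝ)×(ℝ×ℝ) |
          z.2.1 ^ (1 - p m) * z.2.2 ^ bval (j m) ≤ z.1.1 ^ (1 - p m) * z.1.2 ^ bval (i m)}) := by
      ext w
      simp only [hTdef, mem_setOf_eq, mem_preimage, Set.mem_univ_pi]
    rw [hpre, (mpPhi d).measure_preimage (MeasurableSet.univ_pi hBm).nullMeasurableSet,
      Measure.pi_pi, ENNReal.ofReal_prod_of_nonneg (fun m _ => gg_nonneg (hp m) (j m) (i m))]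
    exact Finset.prod_congr rfl fun m _ => coordProb (hp m) (i m) (j m)
  -- put everything together
  have hnn1 : ∀ i j : Fin d → Bool, 0 ≤ (∏ m, gg (p m) (bval (j m)) (bval (i m))) * f i :=
    fun i j => mul_nonneg (Finset.prod_nonneg fun m _ => gg_nonneg (hp m) (j m) (i m)) (hf0 i)
  have hmain : ((ν.prod Q).prod (ν'.prod Q)) E
      = ENNReal.ofReal (∑ j : Fin d → Bool, (∑ i : Fin d → Bool,
          (∏ m, gg (p m) (bval (j m)) (bval (i m))) * f i) * f j) := by
    rw [hdec, ENNReal.ofReal_sum_of_nonneg (fun j _ =>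
      mul_nonneg (Finset.sum_nonneg fun i _ => hnn1 i j) (hf0 j))]
    refine Finset.sum_congr rfl fun j _ => ?_
    rw [ENNReal.ofReal_mul (Finset.sum_nonneg fun i _ => hnn1 i j),
      ENNReal.ofReal_sum_of_nonneg (fun i _ => hnn1 i j), hpmf2' j]
    congr 1
    refine Finset.sum_congr rfl fun i _ => ?_
    rw [ENNReal.ofReal_mul (Finset.prod_nonneg fun m _ => gg_nonneg (hp m) (j m) (i m)),
      hTval i j, hpmf2 i]
  have hrealnn : 0 ≤ ∑ j : Fin d → Bool, (∑ i : Fin d → Bool,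
      (∏ m, gg (p m) (bval (j m)) (bval (i m))) * f i) * f j :=
    Finset.sum_nonneg fun j _ =>
      mul_nonneg (Finset.sum_nonneg fun i _ => hnn1 i j) (hf0 j)
  have h1 : ((P.prod P') {q : Ω × Ω' | ∀ m,
        U₀' m q.2 ^ (1 - p m) * U₁' m q.2 ^ bval (I' q.2 m)
          ≤ U₀ m q.1 ^ (1 - p m) * U₁ m q.1 ^ bval (I q.1 m)}).toReal
      = ∑ i : Fin d → Bool, ∑ j : Fin d → Bool, f i * f j *
          ∏ m, (1 / 2 - (bval (i m) + bval (j m)) / (2 * p m)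
            + (bval (j m) * (1 - p m) + bval (i m)) / (p m * (2 - p m))) := by
    rw [hstep1, hmain, ENNReal.toReal_ofReal hrealnn]
    show ∑ j : Fin d → Bool, (∑ i : Fin d → Bool,
        (∏ m, gg (p m) (bval (j m)) (bval (i m))) * f i) * f j
      = ∑ x : Fin d → Bool, ∑ y : Fin d → Bool, f x * f y *
          ∏ m, gg (p m) (bval (x m)) (bval (y m))
    refine Finset.sum_congr rfl fun x _ => ?_
    rw [Finset.sum_mul]
    refine Finset.sum_congr rfl fun y _ => ?_
    ring
  exact ⟨h1, by rw [h1]⟩
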